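/- Let k ≥ 1 and l ≥ 2 be integers. Let D' be a finite digraph in which every directed cycle has length at least (k−1)(l−1)+1 and every subset of at most 2 vertices is dominated. Define the digraph D on the same vertex set, with an arc v → w iff there is a directed walk in D' from v to w using at least 1 and at most l−1 arcs. Then D is a (k,l)-digraph: every directed cycle of D has length at least k, and every subset of at most l vertices of D is dominated in D. -/
import Mathlib


open Finset

/-- A digraph with arc relation `E` has a directed cycle of length `s ≥ 1`:
an injective `z : Fin s → V` with an arc from each `z t` to `z (t+1 mod s)`. -/
def HasCycleOfLength {V : Type*} (E : V → V → Prop) (s : ℕ) : Prop :=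
  ∃ z : Fin s → V, Function.Injective z ∧
    ∀ t : Fin s, E (z t) (z ⟨(t.1 + 1) % s, Nat.mod_lt _ t.pos⟩)

/-- There is a directed walk from `v` to `w` using exactly `t` arcs. -/
def HasWalk {V : Type*} (E : V → V → Prop) : ℕ → V → V → Prop
  | 0, v, w => v = w
  | t + 1, v, w => ∃ u, E v u ∧ HasWalk E t u w

lemma hasWalk_trans {V : Type*} {E : V → V → Prop} :
    ∀ {a b : ℕ} {v u w : V}, HasWalk E a v u → HasWalk E b u w → HasWalk E (a + b) v w := by
  intro a
  induction a with
  | zero =>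
    intro b v u w h1 h2
    have : v = u := h1
    subst this
    rw [Nat.zero_add]
    exact h2
  | succ a ih =>
    intro b v u w h1 h2
    obtain ⟨x, hx, hw⟩ := h1
    have heq : a + 1 + b = (a + b) + 1 := by omega
    rw [heq]
    exact ⟨x, hx, ih hw h2⟩

lemma hasWalk_fun {V : Type*} {E : V → V → Prop} :
    ∀ {t : ℕ} {v w : V}, HasWalk E t v w →
      ∃ f : ℕ → V, f 0 = v ∧ f t = w ∧ ∀ i < t, E (f i) (f (i + 1)) := by
  intro t
  induction t with
  | zero =>
    intro v w h
    exact ⟨fun _ => v, rfl, h, fun i hi => absurd hi (by omega)⟩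
  | succ t ih =>
    intro v w h
    obtain ⟨u, hu, hw⟩ := h
    obtain ⟨f, hf0, hft, hfe⟩ := ih hw
    refine ⟨fun i => if i = 0 then v else f (i - 1), by simp, by simp [hft], ?_⟩
    intro i hi
    cases i with
    | zero => simpa [hf0] using hu
    | succ j =>
      have := hfe j (by omega)
      simpa using this

lemma extract_cycle {V : Type*} {E : V → V → Prop} :
    ∀ T : ℕ, 1 ≤ T → ∀ f : ℕ → V, f T = f 0 → (∀ i < T, E (f i) (f (i + 1))) →
      ∃ s, 1 ≤ s ∧ s ≤ T ∧ HasCycleOfLength E s := by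
  intro T
  induction T using Nat.strong_induction_on with
  | _ T ih =>
    intro hT f hfT hfe
    by_cases hinj : ∀ i j, i < T → j < T → f i = f j → i = j
    · refine ⟨T, hT, le_rfl, ⟨fun i : Fin T => f i.1, ?_, ?_⟩⟩
      · intro a b hab
        exact Fin.ext (hinj a.1 b.1 a.2 b.2 hab)
      · intro t
        show E (f t.1) (f ((t.1 + 1) % T))
        have key : f ((t.1 + 1) % T) = f (t.1 + 1) := by
          rcases Nat.lt_or_ge (t.1 + 1) T with h | h
          · rw [Nat.mod_eq_of_lt h]
          · have heq : t.1 + 1 = T := by omega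
            rw [heq, Nat.mod_self, ← hfT]
        rw [key]
        exact hfe t.1 t.2
    · push_neg at hinj
      obtain ⟨i, j, hiT, hjT, hfij, hij⟩ := hinj
      obtain ⟨a, b, hab, hbT, hfab⟩ :
          ∃ a b, a < b ∧ b < T ∧ f a = f b := by
        rcases Nat.lt_or_ge i j with h | h
        · exact ⟨i, j, h, hjT, hfij⟩
        · exact ⟨j, i, by omega, hiT, hfij.symm⟩
      obtain ⟨s, hs1, hs2, hs3⟩ := ih (b - a) (by omega) (by omega) (fun m => f (a + m))
        (by show f (a + (b - a)) = f (a + 0)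
            rw [Nat.add_sub_cancel' (by omega : a ≤ b), Nat.add_zero]
            exact hfab.symm)
        (fun m hm => hfe (a + m) (by omega))
      exact ⟨s, hs1, by omega, hs3⟩

lemma dom_chain {V : Type*} {E : V → V → Prop}
    (hdom : ∀ S : Finset V, S.card ≤ 2 → ∃ x : V, ∀ v ∈ S, E x v) :
    ∀ n : ℕ, ∀ S : Finset V, S.card = n + 1 →
      ∃ x : V, ∀ v ∈ S, ∃ t, 1 ≤ t ∧ t ≤ max n 1 ∧ HasWalk E t x v := by
  intro n
  induction n with
  | zero =>
    intro S hS
    obtain ⟨v, rfl⟩ := Finset.card_eq_one.mp hS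
    obtain ⟨x, hx⟩ := hdom {v} (by simp)
    exact ⟨x, fun u hu => ⟨1, le_rfl, le_max_right _ _, u, hx u hu, rfl⟩⟩
  | succ n ih =>
    intro S hS
    rcases Nat.eq_zero_or_pos n with rfl | hn
    · obtain ⟨x, hx⟩ := hdom S (by omega)
      exact ⟨x, fun u hu => ⟨1, le_rfl, le_max_right _ _, u, hx u hu, rfl⟩⟩
    · classical
      have hne : S.Nonempty := by rw [← Finset.card_pos]; omega
      obtain ⟨v, hv⟩ := hne
      have hcard : (S.erase v).card = n + 1 := by
        rw [Finset.card_erase_of_mem hv]; omega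
      obtain ⟨x', hx'⟩ := ih (S.erase v) hcard
      obtain ⟨x, hx⟩ := hdom {x', v} ((Finset.card_insert_le _ _).trans (by simp))
      refine ⟨x, fun u hu => ?_⟩
      by_cases huv : u = v
      · subst huv
        exact ⟨1, le_rfl, le_max_left _ _ |>.trans' (by omega), u, hx u (by simp), rfl⟩
      · obtain ⟨t, ht1, ht2, htw⟩ := hx' u (Finset.mem_erase.mpr ⟨huv, hu⟩)
        have hb : t + 1 ≤ max (n + 1) 1 := by
          have h1 : max n 1 = n := max_eq_left hn
          have h2 : max (n + 1) 1 = n + 1 := max_eq_left (by omega)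
          omega
        exact ⟨t + 1, by omega, hb, x', hx x' (by simp), htw⟩

/-- Theorem 5 (power construction): if D' is a ((k-1)(l-1)+1, 2)-digraph then its
(l-1)-st power D is a (k,l)-digraph. -/
theorem power_digraph (k l : ℕ) (hk : 1 ≤ k) (hl : 2 ≤ l)
    (V : Type) [Fintype V] (E' : V → V → Prop)
    (hgirth : ∀ s : ℕ, 1 ≤ s → HasCycleOfLength E' s → (k - 1) * (l - 1) + 1 ≤ s)
    (hdom : ∀ S : Finset V, S.card ≤ 2 → ∃ x : V, ∀ v ∈ S, E' x v) :
    (∀ s : ℕ, 1 ≤ s →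
        HasCycleOfLength (fun v w => ∃ t, 1 ≤ t ∧ t ≤ l - 1 ∧ HasWalk E' t v w) s →
        k ≤ s) ∧
    (∀ S : Finset V, S.card ≤ l →
        ∃ x : V, ∀ v ∈ S, ∃ t, 1 ≤ t ∧ t ≤ l - 1 ∧ HasWalk E' t x v) := by
  constructor
  · rintro s hs ⟨z, hzinj, hzarc⟩
    have hs0 : 0 < s := hs
    have hwalk : ∀ j : ℕ, (hj : j < s) → ∃ T, j ≤ T ∧ T ≤ j * (l - 1) ∧
        HasWalk E' T (z ⟨0, hs0⟩) (z ⟨j, hj⟩) := by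
      intro j
      induction j with
      | zero => intro hj; exact ⟨0, le_rfl, by omega, rfl⟩
      | succ j ihj =>
        intro hj
        obtain ⟨T, hT1, hT2, hTw⟩ := ihj (by omega)
        obtain ⟨t, ht1, ht2, htw⟩ := hzarc ⟨j, by omega⟩
        have htw' : HasWalk E' t (z ⟨j, by omega⟩) (z ⟨j + 1, hj⟩) := by
          have hmm : (j + 1) % s = j + 1 := Nat.mod_eq_of_lt hj
          simpa only [hmm] using htw
        refine ⟨T + t, by omega, ?_, hasWalk_trans hTw htw'⟩
        have hsm : (j + 1) * (l - 1) = j * (l - 1) + (l - 1) := by ring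
        omega
    obtain ⟨T, hT1, hT2, hTw⟩ := hwalk (s - 1) (by omega)
    obtain ⟨t, ht1, ht2, htw⟩ := hzarc ⟨s - 1, by omega⟩
    have htw' : HasWalk E' t (z ⟨s - 1, by omega⟩) (z ⟨0, hs0⟩) := by
      have h0 : (s - 1 + 1) % s = 0 := by
        rw [Nat.sub_add_cancel hs]; exact Nat.mod_self s
      simpa only [h0] using htw
    have hclosed := hasWalk_trans hTw htw'
    obtain ⟨f, hf0, hfT, hfe⟩ := hasWalk_fun hclosed
    obtain ⟨s', hs'1, hs'2, hs'c⟩ := extract_cycle (T + t) (by omega) f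
      (by rw [hfT, hf0]) hfe
    have hg := hgirth s' hs'1 hs'c
    by_contra hks
    have hmul : s * (l - 1) ≤ (k - 1) * (l - 1) := Nat.mul_le_mul_right _ (by omega)
    have hm : (s - 1) * (l - 1) + (l - 1) = s * (l - 1) := by
      have : s - 1 + 1 = s := by omega
      calc (s - 1) * (l - 1) + (l - 1) = (s - 1 + 1) * (l - 1) := by rw [Nat.succ_mul]
        _ = s * (l - 1) := by rw [this]
    omega
  · intro S hS
    classical
    rcases Finset.eq_empty_or_nonempty S with rfl | hne
    · obtain ⟨x, _⟩ := hdom ∅ (by simp)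
      exact ⟨x, by simp⟩
    · obtain ⟨n, hn⟩ : ∃ n, S.card = n + 1 :=
        ⟨S.card - 1, by have := Finset.card_pos.mpr hne; omega⟩
      obtain ⟨x, hx⟩ := dom_chain hdom n S hn
      refine ⟨x, fun v hv => ?_⟩
      obtain ⟨t, ht1, ht2, htw⟩ := hx v hv
      have hb : max n 1 ≤ l - 1 := by
        have h1 : n ≤ l - 1 := by omega
        have h2 : 1 ≤ l - 1 := by omega
        exact max_le h1 h2
      exact ⟨t, ht1, by omega, htw⟩
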